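/- Let A ∈ ℝ^{N×N} be symmetric, diagonally dominant and negative semidefinite. Let {1,…,N} be partitioned into pairwise disjoint sets Ω̊₁, Ω̊₂, Γ such that A_{kl} = 0 whenever k ∈ Ω̊₁ and l ∈ Ω̊₂ (or vice versa), and assume that every row k ∈ Γ has at least one nonzero off-diagonal entry. Let α_{kl} = α_{lk} ∈ [0,1] be given weights for k,l ∈ Γ. Define A¹ (and symmetrically A², with Ω̊₂ in place of Ω̊₁ and weights 1−α_{kl}) by: A¹_{kl} = A_{kl} if k ∈ Ω̊₁ or l ∈ Ω̊₁; A¹_{kl} = α_{kl} A_{kl} if k,l ∈ Γ with k ≠ l; A¹_{kl} = 0 if k ∈ Ω̊₂ or l ∈ Ω̊₂; and for k ∈ Γ the diagonal A¹_{kk} = A_{kk}·s₁(k)/(s₁(k)+s₂(k)), where s_i(k) = Σ_{l≠k} |Aⁱ_{kl}|. Then A¹ and A² are symmetric, diagonally dominant and negative semidefinite. -/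

import Mathlib

open Matrix

lemma nsd_of_dd {N : ℕ} (M : Matrix (Fin N) (Fin N) ℝ)
    (hs : ∀ k l, M k l = M l k)
    (hdiag : ∀ k, M k k ≤ 0)
    (hdd : ∀ k, ∑ l ∈ Finset.univ.erase k, |M k l| ≤ |M k k|)
    (x : Fin N → ℝ) : x ⬝ᵥ M.mulVec x ≤ 0 := by
  have expand : x ⬝ᵥ M.mulVec x
      = ∑ k, (M k k * x k ^ 2 + ∑ l ∈ Finset.univ.erase k, x k * (M k l * x l)) := by
    simp only [dotProduct, mulVec]
    refine Finset.sum_congr rfl fun k _ => ?_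
    rw [Finset.mul_sum, ← Finset.add_sum_erase _ _ (Finset.mem_univ k)]
    ring_nf
  rw [expand]
  have swap : ∑ k, ∑ l ∈ Finset.univ.erase k, |M k l| * x l ^ 2
      = ∑ k, ∑ l ∈ Finset.univ.erase k, |M k l| * x k ^ 2 := by
    rw [Finset.sum_comm' (fun k l => by
      simp [Finset.mem_erase, and_comm, ne_comm] : ∀ (k l : Fin N),
        k ∈ Finset.univ ∧ l ∈ Finset.univ.erase k ↔
        k ∈ Finset.univ.erase l ∧ l ∈ Finset.univ)]
    refine Finset.sum_congr rfl fun l _ => Finset.sum_congr rfl fun k _ => ?_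
    rw [hs]
  have step : ∀ k, (M k k * x k ^ 2 + ∑ l ∈ Finset.univ.erase k, x k * (M k l * x l))
      ≤ M k k * x k ^ 2 + ((∑ l ∈ Finset.univ.erase k, |M k l| * x k ^ 2) / 2
        + (∑ l ∈ Finset.univ.erase k, |M k l| * x l ^ 2) / 2) := by
    intro k
    have : ∑ l ∈ Finset.univ.erase k, x k * (M k l * x l)
        ≤ ∑ l ∈ Finset.univ.erase k, (|M k l| * x k ^ 2 / 2 + |M k l| * x l ^ 2 / 2) := by
      refine Finset.sum_le_sum fun l _ => ?_
      nlinarith [sq_nonneg (x k - x l), sq_nonneg (x k + x l),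
        le_abs_self (M k l), neg_abs_le (M k l)]
    rw [Finset.sum_add_distrib, ← Finset.sum_div, ← Finset.sum_div] at this
    linarith
  calc ∑ k, (M k k * x k ^ 2 + ∑ l ∈ Finset.univ.erase k, x k * (M k l * x l))
      ≤ ∑ k, (M k k * x k ^ 2 + ((∑ l ∈ Finset.univ.erase k, |M k l| * x k ^ 2) / 2
        + (∑ l ∈ Finset.univ.erase k, |M k l| * x l ^ 2) / 2)) :=
        Finset.sum_le_sum fun k _ => step k
    _ = ∑ k, (M k k * x k ^ 2 + ∑ l ∈ Finset.univ.erase k, |M k l| * x k ^ 2) := by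
        rw [Finset.sum_add_distrib, Finset.sum_add_distrib, ← Finset.sum_div, ← Finset.sum_div,
          swap, Finset.sum_add_distrib]
        ring
    _ ≤ 0 := by
        refine Finset.sum_nonpos fun k _ => ?_
        have h1 : ∑ l ∈ Finset.univ.erase k, |M k l| * x k ^ 2
            = (∑ l ∈ Finset.univ.erase k, |M k l|) * x k ^ 2 := by
          rw [Finset.sum_mul]
        rw [h1]
        have h2 : ∑ l ∈ Finset.univ.erase k, |M k l| ≤ -M k k := by
          have := hdd k; rwa [abs_of_nonpos (hdiag k)] at this
        nlinarith [sq_nonneg (x k), h2, hdiag k]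

lemma side_lemma {N : ℕ} (A A1 A2 : Matrix (Fin N) (Fin N) ℝ)
    (hA : ∀ k l, A k l = A l k)
    (hdd : ∀ k, ∑ l ∈ Finset.univ.erase k, |A k l| ≤ |A k k|)
    (hdiag : ∀ k, A k k ≤ 0)
    (O₁ O₂ Γ : Set (Fin N))
    (hcover : ∀ k, k ∈ O₁ ∨ k ∈ O₂ ∨ k ∈ Γ)
    (hΓrow : ∀ k ∈ Γ, ∃ l, l ≠ k ∧ A k l ≠ 0)
    (α : Fin N → Fin N → ℝ)
    (hαsymm : ∀ k l, α k l = α l k)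
    (hα0 : ∀ k l, 0 ≤ α k l) (hα1 : ∀ k l, α k l ≤ 1)
    (hA1O1 : ∀ k l, k ∈ O₁ ∨ l ∈ O₁ → A1 k l = A k l)
    (hA1Γ : ∀ k l, k ∈ Γ → l ∈ Γ → k ≠ l → A1 k l = α k l * A k l)
    (hA1O2 : ∀ k l, k ∈ O₂ ∨ l ∈ O₂ → A1 k l = 0)
    (hA1diag : ∀ k ∈ Γ, A1 k k =
      A k k * (∑ l ∈ Finset.univ.erase k, |A1 k l|) /
        ((∑ l ∈ Finset.univ.erase k, |A1 k l|) + (∑ l ∈ Finset.univ.erase k, |A2 k l|)))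
    (hA2O2 : ∀ k l, k ∈ O₂ ∨ l ∈ O₂ → A2 k l = A k l)
    (hA2Γ : ∀ k l, k ∈ Γ → l ∈ Γ → k ≠ l → A2 k l = (1 - α k l) * A k l)
    (hA2O1 : ∀ k l, k ∈ O₁ ∨ l ∈ O₁ → A2 k l = 0)
    : (∀ k l, A1 k l = A1 l k) ∧
      (∀ k, ∑ l ∈ Finset.univ.erase k, |A1 k l| ≤ |A1 k k|) ∧
      (∀ k, A1 k k ≤ 0) := by
  -- pointwise split identity for k ∈ Γ, l ≠ k
  have hsplit : ∀ k ∈ Γ, ∀ l, l ≠ k → |A1 k l| + |A2 k l| = |A k l| := by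
    intro k hk l hl
    rcases hcover l with h1 | h2 | hg
    · rw [hA1O1 k l (Or.inr h1), hA2O1 k l (Or.inr h1)]; simp
    · rw [hA1O2 k l (Or.inr h2), hA2O2 k l (Or.inr h2)]; simp
    · rw [hA1Γ k l hk hg (Ne.symm hl), hA2Γ k l hk hg (Ne.symm hl), abs_mul, abs_mul,
        abs_of_nonneg (hα0 k l), abs_of_nonneg (by linarith [hα1 k l] : (0:ℝ) ≤ 1 - α k l)]
      ring
  -- sum identity
  have hsum : ∀ k ∈ Γ, (∑ l ∈ Finset.univ.erase k, |A1 k l|)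
      + (∑ l ∈ Finset.univ.erase k, |A2 k l|) = ∑ l ∈ Finset.univ.erase k, |A k l| := by
    intro k hk
    rw [← Finset.sum_add_distrib]
    exact Finset.sum_congr rfl fun l hl => hsplit k hk l (Finset.mem_erase.1 hl).1
  -- positivity of denominator
  have hpos : ∀ k ∈ Γ, 0 < (∑ l ∈ Finset.univ.erase k, |A1 k l|)
      + (∑ l ∈ Finset.univ.erase k, |A2 k l|) := by
    intro k hk
    rw [hsum k hk]
    obtain ⟨l, hl, hne⟩ := hΓrow k hk
    have hmem : l ∈ Finset.univ.erase k := Finset.mem_erase.2 ⟨hl, Finset.mem_univ l⟩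
    have := Finset.single_le_sum (f := fun l => |A k l|) (fun i _ => abs_nonneg _) hmem
    have : 0 < |A k l| := abs_pos.2 hne
    calc (0:ℝ) < |A k l| := this
      _ ≤ _ := Finset.single_le_sum (f := fun l => |A k l|) (fun i _ => abs_nonneg _) hmem
  -- symmetry
  refine ⟨?_, ?_, ?_⟩
  · intro k l
    rcases hcover k with h | h | h
    · rw [hA1O1 k l (Or.inl h), hA1O1 l k (Or.inr h), hA]
    · rcases hcover l with h' | h' | h'
      · rw [hA1O1 k l (Or.inr h'), hA1O1 l k (Or.inl h'), hA]
      · rw [hA1O2 k l (Or.inl h), hA1O2 l k (Or.inr h)]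
      · rw [hA1O2 k l (Or.inl h), hA1O2 l k (Or.inr h)]
    · rcases hcover l with h' | h' | h'
      · rw [hA1O1 k l (Or.inr h'), hA1O1 l k (Or.inl h'), hA]
      · rw [hA1O2 k l (Or.inr h'), hA1O2 l k (Or.inl h')]
      · rcases eq_or_ne k l with rfl | hne
        · rfl
        · rw [hA1Γ k l h h' hne, hA1Γ l k h' h hne.symm, hαsymm, hA]
  all_goals
    intro k
    rcases hcover k with h | h | h
  -- dd, k ∈ O₁
  · calc ∑ l ∈ Finset.univ.erase k, |A1 k l|
        = ∑ l ∈ Finset.univ.erase k, |A k l| :=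
        Finset.sum_congr rfl fun l _ => by rw [hA1O1 k l (Or.inl h)]
      _ ≤ |A k k| := hdd k
      _ = |A1 k k| := by rw [hA1O1 k k (Or.inl h)]
  -- dd, k ∈ O₂
  · have : ∀ l, A1 k l = 0 := fun l => hA1O2 k l (Or.inl h)
    simp [this]
  -- dd, k ∈ Γ
  · have hp := hpos k h
    have hs := hsum k h
    have hd := hA1diag k h
    have hs1 : 0 ≤ ∑ l ∈ Finset.univ.erase k, |A1 k l| :=
      Finset.sum_nonneg fun l _ => abs_nonneg _
    have hkk : (∑ l ∈ Finset.univ.erase k, |A1 k l|)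
        + (∑ l ∈ Finset.univ.erase k, |A2 k l|) ≤ -A k k := by
      rw [hs]
      have := hdd k; rw [abs_of_nonpos (hdiag k)] at this; linarith
    have hA1kk : A1 k k ≤ 0 := by
      rw [hd]
      apply div_nonpos_of_nonpos_of_nonneg
      · exact mul_nonpos_of_nonpos_of_nonneg (hdiag k) hs1
      · linarith
    have key : -(A k k * (∑ l ∈ Finset.univ.erase k, |A1 k l|) /
        ((∑ l ∈ Finset.univ.erase k, |A1 k l|) + (∑ l ∈ Finset.univ.erase k, |A2 k l|)))
        = (-A k k) * (∑ l ∈ Finset.univ.erase k, |A1 k l|) /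
        ((∑ l ∈ Finset.univ.erase k, |A1 k l|) + (∑ l ∈ Finset.univ.erase k, |A2 k l|)) := by
      ring
    rw [abs_of_nonpos hA1kk, hd, key, le_div_iff₀ hp]
    nlinarith
  -- diag, k ∈ O₁
  · rw [hA1O1 k k (Or.inl h)]; exact hdiag k
  -- diag, k ∈ O₂
  · rw [hA1O2 k k (Or.inl h)]
  -- diag, k ∈ Γ
  · have hp := hpos k h
    have hs1 : 0 ≤ ∑ l ∈ Finset.univ.erase k, |A1 k l| :=
      Finset.sum_nonneg fun l _ => abs_nonneg _
    rw [hA1diag k h]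
    apply div_nonpos_of_nonpos_of_nonneg
    · exact mul_nonpos_of_nonpos_of_nonneg (hdiag k) hs1
    · linarith


theorem stmt3 {N : ℕ} (A A1 A2 : Matrix (Fin N) (Fin N) ℝ)
    (hA : A.IsSymm)
    (hdd : ∀ k, ∑ l ∈ Finset.univ.erase k, |A k l| ≤ |A k k|)
    (hnsd : ∀ x : Fin N → ℝ, x ⬝ᵥ A.mulVec x ≤ 0)
    (O₁ O₂ Γ : Set (Fin N))
    (hd12 : Disjoint O₁ O₂) (hd1G : Disjoint O₁ Γ) (hd2G : Disjoint O₂ Γ)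
    (hcover : O₁ ∪ O₂ ∪ Γ = Set.univ)
    (hzero : ∀ k l, (k ∈ O₁ ∧ l ∈ O₂) ∨ (k ∈ O₂ ∧ l ∈ O₁) → A k l = 0)
    (hΓrow : ∀ k ∈ Γ, ∃ l, l ≠ k ∧ A k l ≠ 0)
    (α : Fin N → Fin N → ℝ)
    (hαsymm : ∀ k l, α k l = α l k)
    (hα0 : ∀ k l, 0 ≤ α k l) (hα1 : ∀ k l, α k l ≤ 1)
    -- defining equations for A¹
    (hA1O1 : ∀ k l, k ∈ O₁ ∨ l ∈ O₁ → A1 k l = A k l)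
    (hA1Γ : ∀ k l, k ∈ Γ → l ∈ Γ → k ≠ l → A1 k l = α k l * A k l)
    (hA1O2 : ∀ k l, k ∈ O₂ ∨ l ∈ O₂ → A1 k l = 0)
    (hA1diag : ∀ k ∈ Γ, A1 k k =
      A k k * (∑ l ∈ Finset.univ.erase k, |A1 k l|) /
        ((∑ l ∈ Finset.univ.erase k, |A1 k l|) + (∑ l ∈ Finset.univ.erase k, |A2 k l|)))
    -- defining equations for A²
    (hA2O2 : ∀ k l, k ∈ O₂ ∨ l ∈ O₂ → A2 k l = A k l)
    (hA2Γ : ∀ k l, k ∈ Γ → l ∈ Γ → k ≠ l → A2 k l = (1 - α k l) * A k l)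
    (hA2O1 : ∀ k l, k ∈ O₁ ∨ l ∈ O₁ → A2 k l = 0)
    (hA2diag : ∀ k ∈ Γ, A2 k k =
      A k k * (∑ l ∈ Finset.univ.erase k, |A2 k l|) /
        ((∑ l ∈ Finset.univ.erase k, |A1 k l|) + (∑ l ∈ Finset.univ.erase k, |A2 k l|))) :
    (A1.IsSymm ∧ (∀ k, ∑ l ∈ Finset.univ.erase k, |A1 k l| ≤ |A1 k k|) ∧
      (∀ x : Fin N → ℝ, x ⬝ᵥ A1.mulVec x ≤ 0)) ∧
    (A2.IsSymm ∧ (∀ k, ∑ l ∈ Finset.univ.erase k, |A2 k l| ≤ |A2 k k|) ∧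
      (∀ x : Fin N → ℝ, x ⬝ᵥ A2.mulVec x ≤ 0)) := by
  have hA' : ∀ k l, A k l = A l k := fun k l => hA.apply l k
  have hdiagA : ∀ k, A k k ≤ 0 := by
    intro k
    have := hnsd (Pi.single k 1)
    simpa [dotProduct, mulVec, Pi.single_apply] using this
  have hcover' : ∀ k, k ∈ O₁ ∨ k ∈ O₂ ∨ k ∈ Γ := by
    intro k
    have := Set.mem_univ k
    rw [← hcover] at this
    simpa [Set.mem_union, or_assoc] using this
  obtain ⟨hs1, hdd1, hdg1⟩ := side_lemma A A1 A2 hA' hdd hdiagA O₁ O₂ Γ hcover' hΓrow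
    α hαsymm hα0 hα1 hA1O1 hA1Γ hA1O2 hA1diag hA2O2 hA2Γ hA2O1
  obtain ⟨hs2, hdd2, hdg2⟩ := side_lemma A A2 A1 hA' hdd hdiagA O₂ O₁ Γ
    (fun k => by rcases hcover' k with h | h | h <;> tauto) hΓrow
    (fun k l => 1 - α k l) (fun k l => by rw [hαsymm])
    (fun k l => by linarith [hα1 k l]) (fun k l => by linarith [hα0 k l])
    hA2O2
    (fun k l hk hl hne => hA2Γ k l hk hl hne)
    hA2O1
    (fun k hk => by rw [hA2diag k hk, add_comm (∑ l ∈ Finset.univ.erase k, |A1 k l|)])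
    hA1O1
    (fun k l hk hl hne => by rw [hA1Γ k l hk hl hne]; ring)
    hA1O2
  exact ⟨⟨Matrix.IsSymm.ext fun i j => hs1 j i, hdd1, nsd_of_dd A1 hs1 hdg1 hdd1⟩,
    ⟨Matrix.IsSymm.ext fun i j => hs2 j i, hdd2, nsd_of_dd A2 hs2 hdg2 hdd2⟩⟩
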